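/- Suppose ξ : ℝ → ℝ is nonvanishing and satisfies ξ(−x)/ξ(x) = (x−kρ₁)(x−ρ₂/k)/((x−ρ₁)(x−ρ₂)) for all x where defined, with ρ₁ρ₂ ≠ 0 and k ≠ 0. Then k² = 1 or k² = ρ₂²/ρ₁². -/

import Mathlib

/-- If ξ is nonvanishing and ξ(−x)/ξ(x) = (x−kρ₁)(x−ρ₂/k)/((x−ρ₁)(x−ρ₂))
wherever the denominator is nonzero, with ρ₁ρ₂ ≠ 0 and k ≠ 0, then
k² = 1 or k² = ρ₂²/ρ₁². -/
theorem stmt_8 (ξ : ℝ → ℝ) (ρ₁ ρ₂ k : ℝ)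
    (hξ : ∀ x : ℝ, ξ x ≠ 0)
    (hρ : ρ₁ * ρ₂ ≠ 0) (hk : k ≠ 0)
    (h : ∀ x : ℝ, (x-ρ₁)*(x-ρ₂) ≠ 0 →
      ξ (-x) / ξ x = (x - k*ρ₁)*(x - ρ₂/k)/((x-ρ₁)*(x-ρ₂))) :
    k^2 = 1 ∨ k^2 = ρ₂^2/ρ₁^2 := by
  have hρ1 : ρ₁ ≠ 0 := fun h0 => hρ (by rw [h0]; ring)
  have hρ2 : ρ₂ ≠ 0 := fun h0 => hρ (by rw [h0]; ring)
  set x : ℝ := |ρ₁| + |ρ₂| + 1 with hx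
  have hx1 : |ρ₁| < x := by
    have := abs_nonneg ρ₂; linarith
  have hx2 : |ρ₂| < x := by
    have := abs_nonneg ρ₁; linarith
  have h1a : x - ρ₁ ≠ 0 := by
    have := neg_abs_le ρ₁; have := le_abs_self ρ₁; intro h0; nlinarith
  have h1b : x - ρ₂ ≠ 0 := by
    have := neg_abs_le ρ₂; have := le_abs_self ρ₂; intro h0; nlinarith
  have h2a : -x - ρ₁ ≠ 0 := by
    have := neg_abs_le ρ₁; have := le_abs_self ρ₁; intro h0; nlinarith
  have h2b : -x - ρ₂ ≠ 0 := by
    have := neg_abs_le ρ₂; have := le_abs_self ρ₂; intro h0; nlinarith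
  have hx0 : x ≠ 0 := by
    have := abs_nonneg ρ₁; have := abs_nonneg ρ₂; positivity
  have hd1 : (x - ρ₁) * (x - ρ₂) ≠ 0 := mul_ne_zero h1a h1b
  have hd2 : (-x - ρ₁) * (-x - ρ₂) ≠ 0 := mul_ne_zero h2a h2b
  have e1 := h x hd1
  have e2 := h (-x) hd2
  rw [neg_neg] at e2
  have hprod : ξ (-x) / ξ x * (ξ x / ξ (-x)) = 1 := by
    field_simp
    rw [mul_comm (ξ (-x)) (ξ x)]
    exact div_self (mul_ne_zero (hξ x) (hξ (-x)))
  rw [e1, e2] at hprod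
  field_simp at hprod
  have key2 : (x^2 - k^2*ρ₁^2) * (k^2*x^2 - ρ₂^2)
      = k^2 * ((x^2-ρ₁^2) * (x^2-ρ₂^2)) := by
    linear_combination hprod
  have hfac : (k^2 - 1) * (k^2*ρ₁^2 - ρ₂^2) = 0 := by
    have hx2 : x^2 ≠ 0 := pow_ne_zero 2 hx0
    have : x^2 * ((k^2 - 1) * (k^2*ρ₁^2 - ρ₂^2)) = 0 := by nlinarith [key2]
    exact (mul_eq_zero.mp this).resolve_left hx2
  rcases mul_eq_zero.mp hfac with h0 | h0
  · left; linarith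
  · right
    have : k^2 * ρ₁^2 = ρ₂^2 := by linarith
    field_simp [this]
    exact this
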